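/- Let (Q_T, I_T) be the bound quiver arising from an (m+2)-angulation T of a marked surface, and Λ_T = kQ_T/I_T. Then: (1) Λ_T is a gentle algebra; (2) the only possible saturated cycles in (Q_T, I_T) are (m+2)-cycles; (3) there can be at most m − 1 consecutive zero-relations not lying on a saturated cycle. -/

import Mathlib

set_option autoImplicit false
set_option maxHeartbeats 1000000
set_option linter.unusedSectionVars false
set_option linter.unusedVariables false

noncomputable section

/-! ### Quivers, paths and path algebras -/

section Quivers

/-- A finite quiver. -/
structure QuivData : Type 1 where
  V : Type
  A : Type
  [fV : Fintype V]
  [fA : Fintype A]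
  [dV : DecidableEq V]
  [dA : DecidableEq A]
  src : A → V
  tgt : A → V

attribute [instance] QuivData.fV QuivData.fA QuivData.dV QuivData.dA

namespace QuivData

variable (Q : QuivData)

/-- A (possibly trivial) path: a composable sequence of arrows. -/
def IsPath (l : List Q.A) : Prop := l.Chain' (fun a b => Q.tgt a = Q.src b)

/-- A nonempty cyclic path. -/
def IsCycle (l : List Q.A) : Prop := l ≠ [] ∧ (l ++ l).Chain' (fun a b => Q.tgt a = Q.src b)

/-- A path from the vertex `j` to the vertex `i` (the trivial path only when `i = j`). -/
def IsPathFromTo (j i : Q.V) (l : List Q.A) : Prop :=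
  Q.IsPath l ∧ (∀ a ∈ l.head?, Q.src a = j) ∧ (∀ a ∈ l.getLast?, Q.tgt a = i) ∧
    (l = [] → i = j)

/-- The set of cyclic subpaths of length `r` of the cyclic path `c` (subpaths of the
infinite repetition of `c`). -/
def cycSub (c : List Q.A) (r : ℕ) : Set (List Q.A) :=
  { l | ∃ s < c.length, l = (List.flatten (List.replicate (r / c.length + 1) (c.rotate s))).take r }

end QuivData

variable (k : Type) [Field k]

/-- The defining relations of the path algebra of `Q`, on the free algebra on
vertices and arrows: the vertices are orthogonal idempotents summing to `1`, and for
an arrow `a : i → j` we have `e_i * a = a = a * e_j` (paths compose left-to-right). -/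
inductive PathRel (Q : QuivData) :
    FreeAlgebra k (Q.V ⊕ Q.A) → FreeAlgebra k (Q.V ⊕ Q.A) → Prop
  | vtx (i j : Q.V) : PathRel Q (FreeAlgebra.ι k (Sum.inl i) * FreeAlgebra.ι k (Sum.inl j))
      (if i = j then FreeAlgebra.ι k (Sum.inl i) else 0)
  | src_id (a : Q.A) : PathRel Q
      (FreeAlgebra.ι k (Sum.inl (Q.src a)) * FreeAlgebra.ι k (Sum.inr a))
      (FreeAlgebra.ι k (Sum.inr a))
  | tgt_id (a : Q.A) : PathRel Q
      (FreeAlgebra.ι k (Sum.inr a) * FreeAlgebra.ι k (Sum.inl (Q.tgt a)))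
      (FreeAlgebra.ι k (Sum.inr a))
  | one_eq : PathRel Q (∑ i : Q.V, FreeAlgebra.ι k (Sum.inl i)) 1

/-- The path algebra `kQ`. -/
def PathAlg (Q : QuivData) : Type := RingQuot (PathRel k Q)

instance (Q : QuivData) : Ring (PathAlg k Q) := inferInstanceAs (Ring (RingQuot (PathRel k Q)))

instance (Q : QuivData) : Algebra k (PathAlg k Q) :=
  inferInstanceAs (Algebra k (RingQuot (PathRel k Q)))

/-- The idempotent of the path algebra at a vertex. -/
def vtxElem (Q : QuivData) (i : Q.V) : PathAlg k Q :=
  RingQuot.mkAlgHom k (PathRel k Q) (FreeAlgebra.ι k (Sum.inl i))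

/-- The element of the path algebra given by an arrow. -/
def arrElem (Q : QuivData) (a : Q.A) : PathAlg k Q :=
  RingQuot.mkAlgHom k (PathRel k Q) (FreeAlgebra.ι k (Sum.inr a))

/-- The element of the path algebra given by a nonempty path. -/
def pathElem (Q : QuivData) (l : List Q.A) : PathAlg k Q := (l.map (arrElem k Q)).prod

/-- The element of the path algebra given by a path, the trivial path being taken at
the vertex `v`. -/
def pathElemAt (Q : QuivData) (v : Q.V) (l : List Q.A) : PathAlg k Q :=
  if l.isEmpty then vtxElem k Q v else pathElem k Q l

/-! ### Monomial algebras -/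

/-- The monomial algebra `kQ/I` where `I = ⟨F⟩` is generated by the set `F` of
paths (zero-relations). -/
def MonAlg (Q : QuivData) (F : Set (List Q.A)) : Type :=
  RingQuot (fun x y : PathAlg k Q => y = 0 ∧ ∃ l ∈ F, x = pathElem k Q l)

instance (Q : QuivData) (F : Set (List Q.A)) : Ring (MonAlg k Q F) :=
  inferInstanceAs (Ring (RingQuot _))

instance (Q : QuivData) (F : Set (List Q.A)) : Algebra k (MonAlg k Q F) :=
  inferInstanceAs (Algebra k (RingQuot _))

/-- The image of a vertex idempotent in the monomial algebra. -/
def MonAlg.vtx (Q : QuivData) (F : Set (List Q.A)) (i : Q.V) : MonAlg k Q F :=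
  RingQuot.mkAlgHom k _ (vtxElem k Q i)

/-- The ideal generated by the set of paths `F` is admissible: all zero-relations
have length at least two, and every sufficiently long path contains a zero-relation,
so that `R_Q^n ⊆ ⟨F⟩ ⊆ R_Q^2`. -/
def MonAdmissible (Q : QuivData) (F : Set (List Q.A)) : Prop :=
  (∀ l ∈ F, Q.IsPath l ∧ 2 ≤ l.length) ∧
    ∃ n : ℕ, ∀ l : List Q.A, Q.IsPath l → l.length = n → ∃ f ∈ F, f <:+: l

/-- `F` is a minimal set of generators of the monomial ideal: no generator is a
proper subpath of another. -/
def MonMinimal (Q : QuivData) (F : Set (List Q.A)) : Prop :=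
  ∀ f ∈ F, ∀ g ∈ F, g <:+: f → g = f

/-! ### Quivers with potential and Jacobian algebras -/

/-- The cyclic derivative `∂_a c` of a cycle `c` with respect to an arrow `a`:
`∂_a (α₁ ⋯ α_n) = ∑_{α_i = a} α_{i+1} ⋯ α_n α₁ ⋯ α_{i-1}`. -/
def cycDeriv (Q : QuivData) (a : Q.A) (l : List Q.A) : PathAlg k Q :=
  ∑ i : Fin l.length, if l.get i = a then pathElem k Q ((l.rotate (i.1 + 1)).dropLast) else 0

/-- The cyclic derivative of a potential `W` (a finite linear combination of cycles)
with respect to an arrow. -/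
def potDeriv (Q : QuivData) (W : List Q.A →₀ k) (a : Q.A) : PathAlg k Q :=
  ∑ l ∈ W.support, W l • cycDeriv k Q a l

/-- The Jacobian algebra of a quiver with potential `(Q, W)`: the quotient of the
path algebra by the ideal generated by the cyclic derivatives of `W`. -/
def JacAlg (Q : QuivData) (W : List Q.A →₀ k) : Type :=
  RingQuot (fun x y : PathAlg k Q => y = 0 ∧ ∃ a : Q.A, x = potDeriv k Q W a)

instance (Q : QuivData) (W : List Q.A →₀ k) : Ring (JacAlg k Q W) :=
  inferInstanceAs (Ring (RingQuot _))

instance (Q : QuivData) (W : List Q.A →₀ k) : Algebra k (JacAlg k Q W) :=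
  inferInstanceAs (Algebra k (RingQuot _))

/-- `Λ` is a Jacobian algebra: it is isomorphic to the Jacobian algebra of some
quiver with potential (a linear combination of cycles). -/
def IsJacobianAlgebra (Λ : Type) [Ring Λ] [Algebra k Λ] : Prop :=
  ∃ (Q : QuivData) (W : List Q.A →₀ k),
    (∀ l ∈ W.support, Q.IsCycle l) ∧ Nonempty (Λ ≃ₐ[k] JacAlg k Q W)

/-! ### Hyperpotentials -/

/-- `ρ` is a hyperpotential on `Q`: for each arrow `a : i → j`, `ρ a` is a linear
combination of paths from `j` to `i`, and `∑ₐ [a, ρ a] = 0`. -/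
def IsHyperpotential (Q : QuivData) (ρ : Q.A → PathAlg k Q) : Prop :=
  (∀ a : Q.A, ρ a ∈ Submodule.span k
    {x : PathAlg k Q | ∃ l : List Q.A, Q.IsPathFromTo (Q.tgt a) (Q.src a) l ∧
      x = pathElemAt k Q (Q.tgt a) l}) ∧
  (∑ a : Q.A, (arrElem k Q a * ρ a - ρ a * arrElem k Q a)) = 0

/-- The Jacobian algebra of a hyperpotential. -/
def HypJacAlg (Q : QuivData) (ρ : Q.A → PathAlg k Q) : Type :=
  RingQuot (fun x y : PathAlg k Q => y = 0 ∧ ∃ a : Q.A, x = ρ a)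

instance (Q : QuivData) (ρ : Q.A → PathAlg k Q) : Ring (HypJacAlg k Q ρ) :=
  inferInstanceAs (Ring (RingQuot _))

instance (Q : QuivData) (ρ : Q.A → PathAlg k Q) : Algebra k (HypJacAlg k Q ρ) :=
  inferInstanceAs (Algebra k (RingQuot _))

/-- `Λ` is the Jacobian algebra of a hyperpotential. -/
def IsHyperpotentialJacobian (Λ : Type) [Ring Λ] [Algebra k Λ] : Prop :=
  ∃ (Q : QuivData) (ρ : Q.A → PathAlg k Q),
    IsHyperpotential k Q ρ ∧ Nonempty (Λ ≃ₐ[k] HypJacAlg k Q ρ)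

/-! ### Gentle algebras -/

/-- A gentle bound quiver `(Q, R)`, where `R` is the set of (length two)
zero-relations. -/
structure IsGentleQuiver (Q : QuivData) (R : Set (Q.A × Q.A)) : Prop where
  /-- relations are between composable arrows -/
  composable : ∀ p ∈ R, Q.tgt p.1 = Q.src p.2
  /-- (g1): at most two arrows start at any vertex -/
  src_two : ∀ a b c : Q.A, Q.src a = Q.src b → Q.src a = Q.src c → a = b ∨ a = c ∨ b = c
  /-- (g1): at most two arrows end at any vertex -/
  tgt_two : ∀ a b c : Q.A, Q.tgt a = Q.tgt b → Q.tgt a = Q.tgt c → a = b ∨ a = c ∨ b = c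
  /-- (g3): for each `β` at most one `α` with `αβ ∈ I` -/
  rel_left_unique : ∀ α α' β : Q.A, (α, β) ∈ R → (α', β) ∈ R → α = α'
  /-- (g3): for each `β` at most one `γ` with `βγ ∈ I` -/
  rel_right_unique : ∀ α β β' : Q.A, (α, β) ∈ R → (α, β') ∈ R → β = β'
  /-- (g4): for each `β` at most one `α` with `αβ ∉ I` -/
  nonrel_left_unique : ∀ α α' β : Q.A, Q.tgt α = Q.src β → Q.tgt α' = Q.src β →
    (α, β) ∉ R → (α', β) ∉ R → α = α'
  /-- (g4): for each `β` at most one `γ` with `βγ ∉ I` -/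
  nonrel_right_unique : ∀ α β β' : Q.A, Q.tgt α = Q.src β → Q.tgt α = Q.src β' →
    (α, β) ∉ R → (α, β') ∉ R → β = β'

/-- The zero-relations of a gentle presentation, as a set of paths of length two. -/
def relPaths (Q : QuivData) (R : Set (Q.A × Q.A)) : Set (List Q.A) :=
  {l | ∃ p ∈ R, l = [p.1, p.2]}

/-- The gentle algebra `kQ/⟨R⟩`. -/
def GentleAlg (Q : QuivData) (R : Set (Q.A × Q.A)) : Type := MonAlg k Q (relPaths Q R)

instance (Q : QuivData) (R : Set (Q.A × Q.A)) : Ring (GentleAlg k Q R) :=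
  inferInstanceAs (Ring (MonAlg k Q (relPaths Q R)))

instance (Q : QuivData) (R : Set (Q.A × Q.A)) : Algebra k (GentleAlg k Q R) :=
  inferInstanceAs (Algebra k (MonAlg k Q (relPaths Q R)))

/-- The image of a vertex idempotent in a gentle algebra. -/
def GentleAlg.vtx (Q : QuivData) (R : Set (Q.A × Q.A)) (x : Q.V) : GentleAlg k Q R :=
  MonAlg.vtx k Q (relPaths Q R) x

/-- A saturated cycle (without arrow repetition): any two cyclically consecutive
arrows form a zero-relation.  A saturated loop is the case of a single loop `δ`
with `δ² ∈ I`. -/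
def IsSaturatedCycle (Q : QuivData) (R : Set (Q.A × Q.A)) (l : List Q.A) : Prop :=
  l ≠ [] ∧ l.Nodup ∧ (l ++ l).Chain' (fun a b => (a, b) ∈ R)

end Quivers

/-! ### `(m+2)`-angulations of unpunctured marked surfaces -/

section Angulations

/-- A combinatorial `(m+2)`-angulation of an oriented unpunctured marked surface:
a finite collection of `(m+2)`-gons, with sides labelled by internal arcs or boundary
segments and corners labelled by marked points, glued along internal arcs (each arc
occurs exactly twice, each boundary segment once, and the gluing is
orientation-compatible: it identifies corners as prescribed by `corner_eq_iff`).
Every marked point lies on the boundary (the surface is unpunctured). -/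
structure Angulation (m : ℕ) : Type 1 where
  /-- internal arcs -/
  Arc : Type
  /-- boundary segments -/
  Bd : Type
  /-- the `(m+2)`-gons -/
  Gon : Type
  /-- marked points -/
  Pt : Type
  [finArc : Fintype Arc]
  [finBd : Fintype Bd]
  [finGon : Fintype Gon]
  [finPt : Fintype Pt]
  [deqArc : DecidableEq Arc]
  [deqBd : DecidableEq Bd]
  [deqGon : DecidableEq Gon]
  [deqPt : DecidableEq Pt]
  /-- the sides of each gon, in clockwise cyclic order -/
  side : Gon → ZMod (m + 2) → Arc ⊕ Bd
  /-- the corner of a gon between its sides at positions `p` and `p + 1` is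
  `corner _ p`; the side at position `p` joins `corner _ p` to `corner _ (p+1)` -/
  corner : Gon → ZMod (m + 2) → Pt
  /-- every internal arc is a side of exactly two (gon, position) pairs -/
  arc_two : ∀ a : Arc,
    (Finset.univ.filter fun gp : Gon × ZMod (m + 2) => side gp.1 gp.2 = Sum.inl a).card = 2
  /-- every boundary segment is a side of exactly one (gon, position) pair -/
  bd_one : ∀ b : Bd,
    (Finset.univ.filter fun gp : Gon × ZMod (m + 2) => side gp.1 gp.2 = Sum.inr b).card = 1
  /-- marked points are exactly the corners, identified exactly along the
  orientation-reversing gluings of arcs -/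
  corner_eq_iff : ∀ s s' : Gon × ZMod (m + 2),
    corner s.1 s.2 = corner s'.1 s'.2 ↔ Relation.EqvGen
      (fun u v : Gon × ZMod (m + 2) => ∃ a : Arc,
        side u.1 u.2 = Sum.inl a ∧ side v.1 (v.2 - 1) = Sum.inl a ∧ u ≠ (v.1, v.2 - 1))
      s s'
  /-- every marked point lies on the boundary: the surface is unpunctured -/
  unpunctured : ∀ x : Pt, ∃ (G : Gon) (p : ZMod (m + 2)) (b : Bd),
    side G p = Sum.inr b ∧ (corner G p = x ∨ corner G (p + 1) = x)

attribute [instance] Angulation.finArc Angulation.finBd Angulation.finGon Angulation.finPt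
attribute [instance] Angulation.deqArc Angulation.deqBd Angulation.deqGon Angulation.deqPt

variable {m : ℕ} (T : Angulation m)

/-- An arrow of the quiver of an `(m+2)`-angulation: a gon `G` together with a
position `p` such that the sides of `G` at `p` and `p + 1` are both internal arcs;
the arrow goes from the arc at `p + 1` to the arc at `p` (`i` follows `j`
clockwise). -/
structure AngArrow {m : ℕ} (T : Angulation m) : Type where
  G : T.Gon
  p : ZMod (m + 2)
  tgtArc : T.Arc
  srcArc : T.Arc
  htgt : T.side G p = Sum.inl tgtArc
  hsrc : T.side G (p + 1) = Sum.inl srcArc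

instance : Fintype (AngArrow T) :=
  Fintype.ofInjective (fun x : AngArrow T => (x.G, x.p, x.tgtArc, x.srcArc))
    (by rintro ⟨G, p, t, s, ht, hs⟩ ⟨G', p', t', s', ht', hs'⟩ h; simp_all)

/-- The bound quiver `(Q_T, I_T)` of an `(m+2)`-angulation: vertices are the internal
arcs, with an arrow `i → j` whenever `i` and `j` are sides of the same gon sharing a
corner and `i` follows `j` clockwise. -/
def angQuiv : QuivData where
  V := T.Arc
  A := AngArrow T
  dA := Classical.decEq _
  src x := x.srcArc
  tgt x := x.tgtArc

/-- The relations of an `(m+2)`-angulation: `αβ ∈ I_T` exactly when the three arcs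
involved are sides of the same gon, i.e. the two arrows are consecutive in a gon. -/
def angRel : Set ((angQuiv T).A × (angQuiv T).A) :=
  {p | p.1.G = p.2.G ∧ p.2.p = p.1.p - 1}

/-- The zero-relations of an angulation, as paths of length two. -/
def angF : Set (List (angQuiv T).A) := relPaths (angQuiv T) (angRel T)

/-- The algebra `Λ_T = kQ_T/I_T` arising from an `(m+2)`-angulation. -/
def AngAlg (k : Type) [Field k] {m : ℕ} (T : Angulation m) : Type :=
  MonAlg k (angQuiv T) (angF T)

instance (k : Type) [Field k] : Ring (AngAlg k T) :=
  inferInstanceAs (Ring (MonAlg k (angQuiv T) (angF T)))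

instance (k : Type) [Field k] : Algebra k (AngAlg k T) :=
  inferInstanceAs (Algebra k (MonAlg k (angQuiv T) (angF T)))

/-- The Euler characteristic of the surface underlying an angulation. -/
def Angulation.euler : ℤ :=
  (Fintype.card T.Pt : ℤ) - ((Fintype.card T.Arc : ℤ) + (Fintype.card T.Bd : ℤ))
    + (Fintype.card T.Gon : ℤ)

/-- Two gons are adjacent when they share an internal arc. -/
def Angulation.GonAdj (G G' : T.Gon) : Prop :=
  ∃ (a : T.Arc) (p q : ZMod (m + 2)), T.side G p = Sum.inl a ∧ T.side G' q = Sum.inl a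

/-- The surface underlying the angulation is connected. -/
def Angulation.Connected : Prop := ∀ G G' : T.Gon, Relation.ReflTransGen T.GonAdj G G'

/-- The angulation is an `(m+2)`-angulation of a disk (the underlying oriented
surface is connected with Euler characteristic 1).  The resulting algebras are the
`m`-cluster tilted algebras of type `𝔸`. -/
def IsDiskAngulation : Prop := T.Connected ∧ T.euler = 1

/-- The angulation is an `(m+2)`-angulation of an annulus (the underlying oriented
surface is connected with nonempty boundary and Euler characteristic 0).  The
resulting algebras are the `m`-cluster tilted algebras of type `𝔸~`. -/
def IsAnnulusAngulation : Prop := T.Connected ∧ T.euler = 0 ∧ Nonempty T.Bd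

end Angulations
section AngHelper

variable {m : ℕ} {T : Angulation m}

lemma arr_ext {x y : AngArrow T} (hG : x.G = y.G) (hp : x.p = y.p) : x = y := by
  obtain ⟨G, p, t, s, ht, hs⟩ := x
  obtain ⟨G', p', t', s', ht', hs'⟩ := y
  dsimp at hG hp
  subst hG; subst hp
  obtain rfl : t = t' := Sum.inl.inj (ht.symm.trans ht')
  obtain rfl : s = s' := Sum.inl.inj (hs.symm.trans hs')
  rfl

/-- The set of occurrences of an arc as a side. -/
def occ (T : Angulation m) (a : T.Arc) : Finset (T.Gon × ZMod (m + 2)) :=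
  Finset.univ.filter fun gp => T.side gp.1 gp.2 = Sum.inl a

lemma mem_occ {a : T.Arc} {gp : T.Gon × ZMod (m + 2)} :
    gp ∈ occ T a ↔ T.side gp.1 gp.2 = Sum.inl a := by
  simp [occ]

lemma occ_card (a : T.Arc) : (occ T a).card = 2 := T.arc_two a

lemma tgt_occ (x : AngArrow T) : (x.G, x.p) ∈ occ T x.tgtArc := mem_occ.mpr x.htgt

lemma src_occ (x : AngArrow T) : (x.G, x.p + 1) ∈ occ T x.srcArc := mem_occ.mpr x.hsrc

lemma three_in_two {α : Type*} [DecidableEq α] {s : Finset α} (h : s.card = 2) {x y z : α}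
    (hx : x ∈ s) (hy : y ∈ s) (hz : z ∈ s) : x = y ∨ x = z ∨ y = z := by
  obtain ⟨u, v, huv, rfl⟩ := Finset.card_eq_two.mp h
  simp only [Finset.mem_insert, Finset.mem_singleton] at hx hy hz
  rcases hx with rfl | rfl <;> rcases hy with rfl | rfl <;> rcases hz with rfl | rfl <;> tauto

lemma two_unique {α : Type*} [DecidableEq α] {s : Finset α} (h : s.card = 2) {x y z : α}
    (hx : x ∈ s) (hy : y ∈ s) (hz : z ∈ s) (hxz : x ≠ z) (hyz : y ≠ z) : x = y := by
  obtain ⟨u, v, huv, rfl⟩ := Finset.card_eq_two.mp h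
  simp only [Finset.mem_insert, Finset.mem_singleton] at hx hy hz
  rcases hx with rfl | rfl <;> rcases hy with rfl | rfl <;> rcases hz with rfl | rfl <;> tauto

lemma mem_angRel_iff {α β : AngArrow T} :
    (α, β) ∈ angRel T ↔ (α.G, α.p) = (β.G, β.p + 1) := by
  simp only [angRel, Set.mem_setOf_eq, Prod.mk.injEq]
  constructor
  · rintro ⟨h1, h2⟩; exact ⟨h1, by rw [h2]; ring⟩
  · rintro ⟨h1, h2⟩; exact ⟨h1, by rw [h2]; ring⟩

lemma chain_index {l : List (AngArrow T)}
    (h : l.Chain' (fun a b => (a, b) ∈ angRel T)) (i : ℕ) (hi : i < l.length)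
    (h0 : 0 < l.length) :
    (l[i]'hi).G = (l[0]'h0).G ∧ (l[i]'hi).p = (l[0]'h0).p - (i : ZMod (m + 2)) := by
  induction i with
  | zero => exact ⟨rfl, by simp⟩
  | succ n ih =>
    have hn : n < l.length := Nat.lt_of_succ_lt hi
    obtain ⟨hG, hp⟩ := ih hn
    have hrel : (l[n]'hn, l[n+1]'hi) ∈ angRel T := by
      have := List.isChain_iff_getElem.mp h n hi
      exact this
    have := mem_angRel_iff.mp hrel
    have h1 : (l[n]'hn).G = (l[n+1]'hi).G := congrArg Prod.fst this
    have h2 : (l[n]'hn).p = (l[n+1]'hi).p + 1 := congrArg Prod.snd this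
    refine ⟨h1.symm.trans hG, ?_⟩
    have : (l[n+1]'hi).p = (l[n]'hn).p - 1 := by rw [h2]; ring
    rw [this, hp]
    push_cast
    ring

/-- Every saturated cycle has length `m + 2`. -/
lemma sat_cycle_len {l : List (AngArrow T)}
    (hs : IsSaturatedCycle (angQuiv T) (angRel T) l) : l.length = m + 2 := by
  obtain ⟨hne, hnd, hch⟩ := hs
  replace hch := (List.isChain_append (R := fun a b : AngArrow T => (a, b) ∈ angRel T) (l₁ := l) (l₂ := l)).mp hch
  obtain ⟨hc, -, hlast⟩ := hch
  have h0 : 0 < l.length := List.length_pos_iff.mpr hne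
  have hlg : l.getLast? = some (l[l.length - 1]'(by omega)) := by
    rw [List.getLast?_eq_getLast (l := l) (List.length_pos_iff.mp h0), List.getLast_eq_getElem]
  have hhd : l.head? = some (l[0]'h0) := by
    rw [List.head?_eq_head (l := l) (List.length_pos_iff.mp h0), List.head_eq_getElem]
  have hrel : (l[l.length - 1]'(by omega), l[0]'h0) ∈ angRel T := by
    apply hlast _ _ _ (by rw [hhd]; rfl)
    rw [hlg]; rfl
  obtain ⟨-, hp⟩ := chain_index hc (l.length - 1) (by omega) h0
  have h2 : (l[l.length - 1]'(by omega)).p = (l[0]'h0).p + 1 :=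
    congrArg Prod.snd (mem_angRel_iff.mp hrel)
  rw [hp] at h2
  have hcast : ((l.length - 1 : ℕ) : ZMod (m + 2)) = (l.length : ZMod (m + 2)) - 1 := by
    have := Nat.cast_sub (R := ZMod (m + 2)) h0
    simpa using this
  rw [hcast] at h2
  have hz : (l.length : ZMod (m + 2)) = 0 := by linear_combination -h2
  have hdvd : (m + 2) ∣ l.length := (ZMod.natCast_eq_zero_iff _ _).mp hz
  have hge : m + 2 ≤ l.length := Nat.le_of_dvd h0 hdvd
  by_contra hne2
  have hlt : m + 2 < l.length := by omega
  obtain ⟨hG, hp'⟩ := chain_index hc (m + 2) hlt h0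
  have : l[m + 2]'hlt = l[0]'h0 := by
    apply arr_ext hG
    rw [hp']
    simp
  have := (List.Nodup.getElem_inj_iff hnd).mp this
  omega

end AngHelper

section AngHelper2

variable {m : ℕ} {T : Angulation m}

lemma arr_ext_pair {x y : AngArrow T} (h : (x.G, x.p) = (y.G, y.p)) : x = y :=
  arr_ext (congrArg Prod.fst h) (congrArg Prod.snd h)

lemma arr_ext_pair' {x y : AngArrow T} (h : (x.G, x.p + 1) = (y.G, y.p + 1)) : x = y :=
  arr_ext (congrArg Prod.fst h) (add_right_cancel (congrArg Prod.snd h))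

lemma cast_val_eq {n : ℕ} [NeZero n] (x : ZMod n) : ((x.val : ℕ) : ZMod n) = x :=
  ZMod.natCast_rightInverse x

end AngHelper2

section AngHelper3

variable {m : ℕ} {T : Angulation m}

/-- A chain of consecutive relations avoiding all saturated cycles has length at most `m`. -/
lemma rel_chain_len {l : List (AngArrow T)}
    (hch : l.Chain' (fun a b => (a, b) ∈ angRel T))
    (hex : ∃ a ∈ l, ∀ w : List (AngArrow T),
      IsSaturatedCycle (angQuiv T) (angRel T) w → a ∉ w) :
    l.length ≤ m := by
  by_contra hlen
  push_neg at hlen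
  have h0 : 0 < l.length := by omega
  set G := (l[0]'h0).G with hGdef
  set p₀ := (l[0]'h0).p with hpdef
  have hall : ∀ q : ZMod (m + 2), ∃ t : T.Arc, T.side G q = Sum.inl t := by
    intro q
    have hq : q = p₀ + 1 - (((p₀ + 1 - q).val : ℕ) : ZMod (m + 2)) := by
      rw [cast_val_eq]; ring
    rcases Nat.eq_zero_or_pos (p₀ + 1 - q).val with h' | h'
    · refine ⟨(l[0]'h0).srcArc, ?_⟩
      have hs := (l[0]'h0).hsrc
      have : q = p₀ + 1 := by rw [hq, h']; push_cast; ring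
      rw [this]
      exact hs
    · set j := (p₀ + 1 - q).val with hjdef
      have hjlt : j < m + 2 := ZMod.val_lt _
      have hj1 : j - 1 < l.length := by omega
      obtain ⟨hG', hp'⟩ := chain_index hch (j - 1) hj1 h0
      refine ⟨(l[j-1]'hj1).tgtArc, ?_⟩
      have hcast : ((j - 1 : ℕ) : ZMod (m + 2)) = (j : ZMod (m + 2)) - 1 := by
        have := Nat.cast_sub (R := ZMod (m + 2)) h'
        simpa using this
      have hqq : q = (l[j-1]'hj1).p := by
        rw [hp', ← hpdef, hcast, hq]; ring
      have hGq : G = (l[j-1]'hj1).G := by rw [hG', hGdef]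
      rw [hqq, hGq]
      exact (l[j-1]'hj1).htgt
  choose f hf using hall
  set arrow : ZMod (m + 2) → AngArrow T :=
    fun q => ⟨G, q, f q, f (q + 1), hf q, hf (q + 1)⟩ with harrow
  set w : List (AngArrow T) :=
    (List.range (m + 2)).map (fun i : ℕ => arrow (p₀ - (i : ZMod (m + 2)))) with hwdef
  have hwlen : w.length = m + 2 := by simp [hwdef]
  have hwne : w ≠ [] := by
    intro h; rw [h] at hwlen; simp at hwlen
  have harrF : ∀ q : ZMod (m + 2), (arrow q, arrow (q - 1)) ∈ angRel T := by
    intro q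
    apply mem_angRel_iff.mpr
    show (G, q) = (G, q - 1 + 1)
    exact Prod.ext rfl (by ring)
  have hS : ∀ i j : ℕ, ((i : ZMod (m + 2)) + 1 = (j : ZMod (m + 2))) →
      (arrow (p₀ - (i : ZMod (m + 2))), arrow (p₀ - (j : ZMod (m + 2)))) ∈ angRel T := by
    intro i j hij
    have : p₀ - (j : ZMod (m + 2)) = (p₀ - (i : ZMod (m + 2))) - 1 := by
      rw [← hij]; ring
    rw [this]
    exact harrF _
  have hrange : (List.range (m + 2)).Chain'
      (fun i j : ℕ => (arrow (p₀ - (i : ZMod (m + 2))), arrow (p₀ - (j : ZMod (m + 2)))) ∈ angRel T) := by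
    apply (List.isChain_range_succ _ _).mpr
    intro i hi
    apply hS
    push_cast
    ring
  have key : ((List.range (m + 2) ++ List.range (m + 2)).map
      (fun i : ℕ => arrow (p₀ - (i : ZMod (m + 2))))).Chain'
      (fun a b : AngArrow T => (a, b) ∈ angRel T) := by
    refine (List.isChain_map _).mpr (List.isChain_append.mpr ?_)
    refine ⟨hrange, hrange, ?_⟩
    intro x hx y hy
    have hx' : x = m + 1 := by
      rw [List.range_succ, List.getLast?_concat] at hx
      exact (Option.mem_some_iff.mp hx).symm
    have hy' : y = 0 := by
      rw [List.range_succ_eq_map] at hy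
      simp only [List.head?_cons, Option.mem_def, Option.some.injEq] at hy
      exact hy.symm
    subst hx'; subst hy'
    apply hS
    have hz : ((m + 2 : ℕ) : ZMod (m + 2)) = 0 := ZMod.natCast_self _
    push_cast at hz ⊢
    linear_combination hz
  have hwapp : (w ++ w).Chain' (fun a b : AngArrow T => (a, b) ∈ angRel T) := by
    rw [hwdef, ← List.map_append]
    exact key
  have hwsat : IsSaturatedCycle (angQuiv T) (angRel T) w := by
    refine ⟨hwne, ?_, hwapp⟩
    rw [hwdef]
    refine List.Nodup.map_on ?_ List.nodup_range
    intro i hi j hj hij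
    have h1 : p₀ - (i : ZMod (m + 2)) = p₀ - (j : ZMod (m + 2)) :=
      congrArg AngArrow.p hij
    have h2 : (i : ZMod (m + 2)) = (j : ZMod (m + 2)) := by linear_combination -h1
    have h3 := congrArg ZMod.val h2
    rwa [ZMod.val_cast_of_lt (List.mem_range.mp hi),
      ZMod.val_cast_of_lt (List.mem_range.mp hj)] at h3
  obtain ⟨a, hal, hno⟩ := hex
  obtain ⟨i, hi, ha⟩ := List.mem_iff_getElem.mp hal
  obtain ⟨hG', hp'⟩ := chain_index hch i hi h0
  rw [ha] at hG' hp'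
  refine hno w hwsat ?_
  rw [hwdef]
  refine List.mem_map.mpr ⟨i % (m + 2), List.mem_range.mpr (Nat.mod_lt _ (by omega)), ?_⟩
  apply arr_ext
  · exact hG'.symm
  · show p₀ - ((i % (m + 2) : ℕ) : ZMod (m + 2)) = a.p
    rw [ZMod.natCast_mod i (m + 2), hp']

end AngHelper3

/-- **Proposition.**  Let `(Q_T, I_T)` be the bound quiver of an `(m+2)`-angulation
of an unpunctured marked surface.  Then (1) the algebra `Λ_T = kQ_T/I_T` is gentle;
(2) the only possible saturated cycles are `(m+2)`-cycles; and (3) there are at most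
`m - 1` consecutive zero-relations not lying on a saturated cycle. -/
theorem angulation_bound_quiver_properties (m : ℕ) (T : Angulation m) :
    IsGentleQuiver (angQuiv T) (angRel T) ∧
    (∀ l : List (angQuiv T).A,
      IsSaturatedCycle (angQuiv T) (angRel T) l → l.length = m + 2) ∧
    (∀ l : List (angQuiv T).A, (angQuiv T).IsPath l →
      l.Chain' (fun a b => (a, b) ∈ angRel T) →
      (∃ a ∈ l, ∀ c : List (angQuiv T).A,
        IsSaturatedCycle (angQuiv T) (angRel T) c → a ∉ c) →
      l.length ≤ m) := by
  classical
  refine ⟨⟨?_, ?_, ?_, ?_, ?_, ?_, ?_⟩, fun l hs => sat_cycle_len hs, ?_⟩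
  · -- composable
    rintro ⟨α, β⟩ hR
    have h := mem_angRel_iff.mp hR
    have h1 : α.G = β.G := congrArg Prod.fst h
    have h2 : α.p = β.p + 1 := congrArg Prod.snd h
    show α.tgtArc = β.srcArc
    apply Sum.inl.inj
    rw [← α.htgt, ← β.hsrc, h1, h2]
  · -- src_two
    intro a b c hab hac
    replace hab : a.srcArc = b.srcArc := hab
    replace hac : a.srcArc = c.srcArc := hac
    have ha := src_occ a
    have hb := src_occ b; rw [← hab] at hb
    have hc := src_occ c; rw [← hac] at hc
    rcases three_in_two (occ_card a.srcArc) ha hb hc with h | h | h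
    · exact Or.inl (arr_ext_pair' h)
    · exact Or.inr (Or.inl (arr_ext_pair' h))
    · exact Or.inr (Or.inr (arr_ext_pair' h))
  · -- tgt_two
    intro a b c hab hac
    replace hab : a.tgtArc = b.tgtArc := hab
    replace hac : a.tgtArc = c.tgtArc := hac
    have ha := tgt_occ a
    have hb := tgt_occ b; rw [← hab] at hb
    have hc := tgt_occ c; rw [← hac] at hc
    rcases three_in_two (occ_card a.tgtArc) ha hb hc with h | h | h
    · exact Or.inl (arr_ext_pair h)
    · exact Or.inr (Or.inl (arr_ext_pair h))
    · exact Or.inr (Or.inr (arr_ext_pair h))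
  · -- rel_left_unique
    intro α α' β hR hR'
    exact arr_ext_pair ((mem_angRel_iff.mp hR).trans (mem_angRel_iff.mp hR').symm)
  · -- rel_right_unique
    intro α β β' hR hR'
    exact arr_ext_pair' ((mem_angRel_iff.mp hR).symm.trans (mem_angRel_iff.mp hR'))
  · -- nonrel_left_unique
    intro α α' β hcomp hcomp' hn hn'
    replace hcomp : α.tgtArc = β.srcArc := hcomp
    replace hcomp' : α'.tgtArc = β.srcArc := hcomp'
    have hx := tgt_occ α; rw [hcomp] at hx
    have hy := tgt_occ α'; rw [hcomp'] at hy
    have hz := src_occ β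
    exact arr_ext_pair (two_unique (occ_card β.srcArc) hx hy hz
      (fun h => hn (mem_angRel_iff.mpr h)) (fun h => hn' (mem_angRel_iff.mpr h)))
  · -- nonrel_right_unique
    intro α β β' hcomp hcomp' hn hn'
    replace hcomp : α.tgtArc = β.srcArc := hcomp
    replace hcomp' : α.tgtArc = β'.srcArc := hcomp'
    have hx := src_occ β; rw [← hcomp] at hx
    have hy := src_occ β'; rw [← hcomp'] at hy
    have hz := tgt_occ α
    exact arr_ext_pair' (two_unique (occ_card α.tgtArc) hx hy hz
      (fun h => hn (mem_angRel_iff.mpr h.symm)) (fun h => hn' (mem_angRel_iff.mpr h.symm)))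
  · -- part 3
    intro l hpath hch hex
    exact rel_chain_len hch hex
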